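/- Let f : {−1,1}^n → {−1,1}, let δ ∈ (0,1], let π be a restriction fixing |π| ≤ d coordinates, and let τ > 2δd. Then the number of indices i ∈ {1,…,n} (not fixed by π) with Inf_i((f_δ)_π) ≥ τ is at most 1/(e·δ·(τ − 2δd)²), where (f_δ)_π is the restriction by π of the δ-smoothed version of f, and influence of a real-valued function is taken with respect to the absolute-value metric. -/

import Mathlib

/-!
Noise smoothing and restrictions of boolean functions on {-1,1}^n; a point of the cube is
encoded as `x : Fin n → Bool` (`true` encodes 1, `false` encodes -1). A restriction is
encoded as `π : Fin n → Option Bool`, where `π j = some b` fixes coordinate `j` to `b`.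
-/

/-- The ±1 real value encoded by a boolean: `true ↦ 1`, `false ↦ -1`. -/
noncomputable def bval (b : Bool) : ℝ := if b then 1 else -1

/-- The `δ`-smoothed version of `g`: `g_δ(x) = E[g(x̃)]`, where `x̃` is obtained from `x`
by flipping each coordinate independently with probability `δ/2` (equivalently,
rerandomizing each coordinate independently with probability `δ`). -/
noncomputable def smooth {n : ℕ} (δ : ℝ) (g : (Fin n → Bool) → ℝ) (x : Fin n → Bool) : ℝ :=
  ∑ y : Fin n → Bool, (∏ i : Fin n, if y i = x i then 1 - δ / 2 else δ / 2) * g y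

/-- Apply a restriction: coordinates fixed by `π` are overridden, the rest are read from `x`.
Thus `g ∘ applyR π` is the restricted function `g_π`, viewed as a function of all `n`
variables that ignores the fixed coordinates. -/
def applyR {n : ℕ} (π : Fin n → Option Bool) (x : Fin n → Bool) : Fin n → Bool :=
  fun j => (π j).getD (x j)

/-- `|π|`: the number of coordinates fixed by the restriction `π`. -/
def rsize {n : ℕ} (π : Fin n → Option Bool) : ℕ :=
  (Finset.univ.filter fun j => (π j).isSome).card

/-- The influence of variable `i` on a real-valued `u`, with respect to the absolute-value
metric: `Inf_i(u) = E_x[|u(x) − u(x^{~i})|]`, where `x` is uniform and `x^{~i}` is `x` with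
its `i`-th coordinate rerandomized. -/
noncomputable def inflR {n : ℕ} (u : (Fin n → Bool) → ℝ) (i : Fin n) : ℝ :=
  (∑ x : Fin n → Bool,
      (|u x - u (Function.update x i true)| +
        |u x - u (Function.update x i false)|) / 2) / 2 ^ n

namespace St18
variable {n : ℕ}

noncomputable def chi (S : Finset (Fin n)) (x : Fin n → Bool) : ℝ := ∏ i ∈ S, bval (x i)

lemma sum_prod_bool (g : Fin n → Bool → ℝ) :
    ∑ x : Fin n → Bool, ∏ i, g i (x i) = ∏ i, (g i true + g i false) := by
  have := Finset.prod_univ_sum (fun _ : Fin n => (Finset.univ : Finset Bool)) g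
  rw [Fintype.piFinset_univ] at this
  rw [← this]; simp

lemma chi_eq_prod_univ (S : Finset (Fin n)) (x : Fin n → Bool) :
    chi S x = ∏ i, (if i ∈ S then bval (x i) else 1) := by
  rw [chi, Finset.prod_ite_mem, Finset.univ_inter]

lemma bval_mul_bval (a b : Bool) : bval a * bval b = if a = b then 1 else -1 := by
  cases a <;> cases b <;> simp [bval]

lemma sum_chi_mul_chi (S T : Finset (Fin n)) :
    ∑ x : Fin n → Bool, chi S x * chi T x = if S = T then (2:ℝ)^n else 0 := by
  have h1 : ∀ x : Fin n → Bool, chi S x * chi T x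
      = ∏ i, ((if i ∈ S then bval (x i) else 1) * (if i ∈ T then bval (x i) else 1)) := by
    intro x; rw [chi_eq_prod_univ, chi_eq_prod_univ, ← Finset.prod_mul_distrib]
  rw [Finset.sum_congr rfl (fun x _ => h1 x),
    sum_prod_bool (fun i b => (if i ∈ S then bval b else 1) * (if i ∈ T then bval b else 1))]
  by_cases hST : S = T
  · subst hST; simp only [if_pos rfl]
    have : ∀ i : Fin n, ((if i ∈ S then bval true else 1) * (if i ∈ S then bval true else 1)
        + (if i ∈ S then bval false else 1) * (if i ∈ S then bval false else 1)) = 2 := by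
      intro i; by_cases h : i ∈ S <;> simp [h, bval] <;> norm_num
    rw [Finset.prod_congr rfl (fun i _ => this i)]
    simp
  · rw [if_neg hST]
    have : ∃ i : Fin n, (i ∈ S ∧ i ∉ T) ∨ (i ∈ T ∧ i ∉ S) := by
      by_contra hc
      push_neg at hc
      exact hST (Finset.ext fun i => by have := hc i; tauto)
    obtain ⟨i, hi⟩ := this
    apply Finset.prod_eq_zero (Finset.mem_univ i)
    rcases hi with ⟨h1, h2⟩ | ⟨h1, h2⟩ <;> simp [h1, h2, bval]

noncomputable def cf (u : (Fin n → Bool) → ℝ) (S : Finset (Fin n)) : ℝ :=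
  (∑ x : Fin n → Bool, u x * chi S x) / 2^n

lemma sum_chi_chi (y x : Fin n → Bool) :
    ∑ S : Finset (Fin n), chi S y * chi S x = if y = x then (2:ℝ)^n else 0 := by
  have h1 : ∀ S : Finset (Fin n), chi S y * chi S x = ∏ i ∈ S, (bval (y i) * bval (x i)) := by
    intro S; rw [chi, chi, ← Finset.prod_mul_distrib]
  have h2 : ∑ S : Finset (Fin n), ∏ i ∈ S, (bval (y i) * bval (x i))
      = ∏ i, (bval (y i) * bval (x i) + 1) := by
    rw [Finset.prod_add]
    rw [← Finset.powerset_univ]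
    exact (Finset.sum_congr rfl (fun S _ => by simp)).symm
  rw [Finset.sum_congr rfl (fun S _ => h1 S), h2]
  by_cases hxy : y = x
  · subst hxy
    rw [if_pos rfl]
    have : ∀ i : Fin n, bval (y i) * bval (y i) + 1 = 2 := by
      intro i; cases (y i) <;> simp [bval] <;> norm_num
    rw [Finset.prod_congr rfl (fun i _ => this i)]; simp
  · rw [if_neg hxy]
    have : ∃ i, y i ≠ x i := by
      by_contra hc; push_neg at hc; exact hxy (funext hc)
    obtain ⟨i, hi⟩ := this
    apply Finset.prod_eq_zero (Finset.mem_univ i)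
    rw [bval_mul_bval, if_neg hi]; ring

lemma expansion (u : (Fin n → Bool) → ℝ) (x : Fin n → Bool) :
    u x = ∑ S : Finset (Fin n), cf u S * chi S x := by
  have h2 : (0:ℝ) < 2^n := by positivity
  simp only [cf, div_mul_eq_mul_div, Finset.sum_div, Finset.sum_mul]
  rw [Finset.sum_comm]
  have key : ∀ y : Fin n → Bool, ∑ S : Finset (Fin n), u y * chi S y * chi S x / 2^n
      = if y = x then u y else 0 := by
    intro y
    rw [← Finset.sum_div]
    have : ∑ S : Finset (Fin n), u y * chi S y * chi S x
        = u y * ∑ S : Finset (Fin n), chi S y * chi S x := by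
      rw [Finset.mul_sum]; exact Finset.sum_congr rfl (fun S _ => by ring)
    rw [this, sum_chi_chi]
    by_cases h : y = x
    · rw [if_pos h, if_pos h]; field_simp
    · rw [if_neg h, if_neg h]; simp
  rw [Finset.sum_congr rfl (fun y _ => key y)]
  rw [Finset.sum_ite_eq' Finset.univ x (fun y => u y)]
  simp

lemma parseval_family (a : Finset (Fin n) → ℝ) :
    ∑ x : Fin n → Bool, (∑ S : Finset (Fin n), a S * chi S x)^2
      = 2^n * ∑ S : Finset (Fin n), (a S)^2 := by
  have expand : ∀ x : Fin n → Bool, (∑ S : Finset (Fin n), a S * chi S x)^2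
      = ∑ S : Finset (Fin n), ∑ T : Finset (Fin n), a S * a T * (chi S x * chi T x) := by
    intro x
    rw [sq, Finset.sum_mul_sum]
    exact Finset.sum_congr rfl fun S _ => Finset.sum_congr rfl fun T _ => by ring
  rw [Finset.sum_congr rfl (fun x _ => expand x), Finset.sum_comm]
  have : ∀ S : Finset (Fin n), ∑ x : Fin n → Bool, ∑ T : Finset (Fin n),
      a S * a T * (chi S x * chi T x) = 2^n * (a S)^2 := by
    intro S
    rw [Finset.sum_comm]
    have inner : ∀ T : Finset (Fin n), ∑ x : Fin n → Bool, a S * a T * (chi S x * chi T x)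
        = a S * a T * (if S = T then (2:ℝ)^n else 0) := by
      intro T; rw [← Finset.mul_sum, sum_chi_mul_chi]
    rw [Finset.sum_congr rfl (fun T _ => inner T)]
    have : ∀ T : Finset (Fin n), a S * a T * (if S = T then (2:ℝ)^n else 0)
        = if T = S then a S * a T * 2^n else 0 := by
      intro T; by_cases h : S = T
      · subst h; simp
      · rw [if_neg h, if_neg (fun hc => h hc.symm)]; ring
    rw [Finset.sum_congr rfl (fun T _ => this T)]
    rw [Finset.sum_ite_eq' Finset.univ S (fun T => a S * a T * 2^n)]
    simp; ring
  rw [Finset.sum_congr rfl (fun S _ => this S), ← Finset.mul_sum]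

noncomputable def wres (δ : ℝ) (π : Fin n → Option Bool) (i : Fin n) (a c : Bool) : ℝ :=
  (π i).elim (if a = c then (1:ℝ) else 0) (fun b => if a = b then 1 - δ/2 else δ/2)

noncomputable def hres (δ : ℝ) (π : Fin n → Option Bool) (F : (Fin n → Bool) → ℝ)
    (x : Fin n → Bool) : ℝ :=
  ∑ y : Fin n → Bool, (∏ i, wres δ π i (y i) (x i)) * F y

lemma sum_kernel_chi (K : Fin n → Bool → Bool → ℝ) (F : (Fin n → Bool) → ℝ)
    (S : Finset (Fin n)) :
    ∑ x : Fin n → Bool, (∑ y : Fin n → Bool, (∏ i, K i (y i) (x i)) * F y) * chi S x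
    = ∑ y : Fin n → Bool, F y * ∏ i, (K i (y i) true * (if i ∈ S then bval true else 1)
        + K i (y i) false * (if i ∈ S then bval false else 1)) := by
  simp only [Finset.sum_mul]
  rw [Finset.sum_comm]
  refine Finset.sum_congr rfl (fun y _ => ?_)
  have h1 : ∀ x : Fin n → Bool, (∏ i, K i (y i) (x i)) * F y * chi S x
      = F y * ∏ i, (K i (y i) (x i) * (if i ∈ S then bval (x i) else 1)) := by
    intro x; rw [chi_eq_prod_univ, Finset.prod_mul_distrib]; ring
  rw [Finset.sum_congr rfl (fun x _ => h1 x), ← Finset.mul_sum,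
    sum_prod_bool (fun i c => K i (y i) c * (if i ∈ S then bval c else 1))]

lemma factor_eq (δ : ℝ) (π : Fin n → Option Bool) (S : Finset (Fin n)) (y : Fin n → Bool)
    (i : Fin n) :
    ((if y i = (π i).getD true then 1 - δ/2 else δ/2) * (if i ∈ S then bval true else 1)
      + (if y i = (π i).getD false then 1 - δ/2 else δ/2) * (if i ∈ S then bval false else 1))
    = (if i ∈ S then (1-δ) else 1) *
      (wres δ π i (y i) true * (if i ∈ S then bval true else 1)
        + wres δ π i (y i) false * (if i ∈ S then bval false else 1)) := by
  rcases hπi : π i with _ | b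
  · by_cases hiS : i ∈ S <;> cases hyi : y i <;>
      simp [wres, hπi, hiS, bval] <;> ring
  · by_cases hiS : i ∈ S <;> cases hyi : y i <;> cases b <;>
      simp [wres, hπi, hiS, bval] <;> ring

lemma cf_smooth_applyR (δ : ℝ) (π : Fin n → Option Bool) (F : (Fin n → Bool) → ℝ)
    (S : Finset (Fin n)) :
    cf (fun x => smooth δ F (applyR π x)) S = (1-δ)^S.card * cf (hres δ π F) S := by
  unfold cf
  have L := sum_kernel_chi (fun i a c => if a = (π i).getD c then 1 - δ/2 else δ/2) F S
  have R := sum_kernel_chi (wres δ π) F S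
  have hL : (∑ x : Fin n → Bool, smooth δ F (applyR π x) * chi S x)
      = ∑ x : Fin n → Bool,
        (∑ y : Fin n → Bool, (∏ i, if y i = (π i).getD (x i) then 1 - δ/2 else δ/2) * F y)
          * chi S x := rfl
  rw [hL, L]
  have hR : (∑ x : Fin n → Bool, hres δ π F x * chi S x)
      = ∑ x : Fin n → Bool, (∑ y : Fin n → Bool, (∏ i, wres δ π i (y i) (x i)) * F y)
          * chi S x := rfl
  rw [hR, R]
  rw [← mul_div_assoc]
  congr 1
  rw [Finset.mul_sum]
  refine Finset.sum_congr rfl (fun y _ => ?_)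
  have hpow : (1-δ)^S.card = ∏ i, (if i ∈ S then (1-δ) else 1) := by
    rw [Finset.prod_ite_mem, Finset.univ_inter, Finset.prod_const]
  rw [hpow]
  have hprod := Finset.prod_congr rfl (fun i (_ : i ∈ Finset.univ) => factor_eq δ π S y i)
  rw [hprod, Finset.prod_mul_distrib]
  ring

lemma wres_nonneg (δ : ℝ) (hδ0 : 0 ≤ δ) (hδ1 : δ ≤ 1) (π : Fin n → Option Bool)
    (i : Fin n) (a c : Bool) : 0 ≤ wres δ π i a c := by
  rcases hπi : π i with _ | b <;> simp [wres, hπi] <;> split <;> linarith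

lemma wres_sum_one (δ : ℝ) (π : Fin n → Option Bool) (i : Fin n) (c : Bool) :
    wres δ π i true c + wres δ π i false c = 1 := by
  rcases hπi : π i with _ | b <;> [skip; cases b] <;> cases c <;> simp [wres, hπi] <;> ring

lemma abs_hres_le (δ : ℝ) (hδ0 : 0 ≤ δ) (hδ1 : δ ≤ 1) (π : Fin n → Option Bool)
    (F : (Fin n → Bool) → ℝ) (hF : ∀ y, |F y| ≤ 1) (x : Fin n → Bool) :
    |hres δ π F x| ≤ 1 := by
  have hW : ∀ y : Fin n → Bool, 0 ≤ ∏ i, wres δ π i (y i) (x i) :=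
    fun y => Finset.prod_nonneg (fun i _ => wres_nonneg δ hδ0 hδ1 π i (y i) (x i))
  have hsum : ∑ y : Fin n → Bool, ∏ i, wres δ π i (y i) (x i) = 1 := by
    rw [sum_prod_bool (fun i b => wres δ π i b (x i))]
    rw [Finset.prod_congr rfl (fun i _ => wres_sum_one δ π i (x i))]
    simp
  calc |hres δ π F x| ≤ ∑ y : Fin n → Bool, |(∏ i, wres δ π i (y i) (x i)) * F y| :=
        Finset.abs_sum_le_sum_abs _ _
    _ ≤ ∑ y : Fin n → Bool, ∏ i, wres δ π i (y i) (x i) := by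
        refine Finset.sum_le_sum (fun y _ => ?_)
        rw [abs_mul, abs_of_nonneg (hW y)]
        calc (∏ i, wres δ π i (y i) (x i)) * |F y| ≤ (∏ i, wres δ π i (y i) (x i)) * 1 :=
              mul_le_mul_of_nonneg_left (hF y) (hW y)
          _ = ∏ i, wres δ π i (y i) (x i) := mul_one _
    _ = 1 := hsum

lemma sum_cf_sq_le (u : (Fin n → Bool) → ℝ) (hu : ∀ x, |u x| ≤ 1) :
    ∑ S : Finset (Fin n), (cf u S)^2 ≤ 1 := by
  have hp := parseval_family (cf u)
  have hx : ∀ x : Fin n → Bool, (∑ S : Finset (Fin n), cf u S * chi S x) = u x :=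
    fun x => (expansion u x).symm
  rw [Finset.sum_congr rfl (fun x _ => congrArg (·^2) (hx x))] at hp
  have hb : ∑ x : Fin n → Bool, (u x)^2 ≤ (2:ℝ)^n := by
    calc ∑ x : Fin n → Bool, (u x)^2 ≤ ∑ _x : Fin n → Bool, (1:ℝ) := by
          refine Finset.sum_le_sum (fun x _ => ?_)
          have := hu x
          nlinarith [abs_nonneg (u x), sq_abs (u x)]
      _ = (2:ℝ)^n := by simp [Fintype.card_fun]
  have h2 : (0:ℝ) < 2^n := by positivity
  nlinarith [hp]

noncomputable def derfun (u : (Fin n → Bool) → ℝ) (i : Fin n) (x : Fin n → Bool) : ℝ :=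
  (u (Function.update x i true) - u (Function.update x i false)) / 2

lemma chi_update (S : Finset (Fin n)) (i : Fin n) (b : Bool) (x : Fin n → Bool) :
    chi S (Function.update x i b)
      = if i ∈ S then bval b * chi (S.erase i) x else chi S x := by
  by_cases hiS : i ∈ S
  · rw [if_pos hiS, chi, chi, ← Finset.mul_prod_erase S _ hiS, Function.update_self]
    congr 1
    refine Finset.prod_congr rfl (fun j hj => ?_)
    rw [Function.update_of_ne (Finset.ne_of_mem_erase hj)]
  · rw [if_neg hiS, chi, chi]
    refine Finset.prod_congr rfl (fun j hj => ?_)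
    have : j ≠ i := fun h => hiS (h ▸ hj)
    rw [Function.update_of_ne this]

lemma sum_reindex (i : Fin n) (g : Finset (Fin n) → ℝ) :
    ∑ S : Finset (Fin n), (if i ∈ S then g S else 0)
      = ∑ T : Finset (Fin n), (if i ∈ T then 0 else g (insert i T)) := by
  classical
  rw [← Finset.sum_filter]
  have : ∀ T : Finset (Fin n), (if i ∈ T then (0:ℝ) else g (insert i T))
      = if i ∉ T then g (insert i T) else 0 := by
    intro T; by_cases h : i ∈ T <;> simp [h]
  rw [Finset.sum_congr rfl (fun T _ => this T), ← Finset.sum_filter]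
  refine Finset.sum_nbij' (fun S => S.erase i) (fun T => insert i T) ?_ ?_ ?_ ?_ ?_
  · intro S hS
    simp only [Finset.mem_filter, Finset.mem_univ, true_and] at *
    exact Finset.notMem_erase i S
  · intro T hT
    simp only [Finset.mem_filter, Finset.mem_univ, true_and] at *
    exact Finset.mem_insert_self i T
  · intro S hS
    simp only [Finset.mem_filter, Finset.mem_univ, true_and] at hS
    exact Finset.insert_erase hS
  · intro T hT
    simp only [Finset.mem_filter, Finset.mem_univ, true_and] at hT
    exact Finset.erase_insert hT
  · intro S hS
    simp only [Finset.mem_filter, Finset.mem_univ, true_and] at hS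
    rw [Finset.insert_erase hS]
lemma derfun_eq (u : (Fin n → Bool) → ℝ) (i : Fin n) (x : Fin n → Bool) :
    derfun u i x
      = ∑ T : Finset (Fin n), (if i ∈ T then 0 else cf u (insert i T)) * chi T x := by
  have h1 : derfun u i x = ∑ S : Finset (Fin n),
      (if i ∈ S then cf u S * chi (S.erase i) x else 0) := by
    rw [derfun, expansion u (Function.update x i true), expansion u (Function.update x i false),
      ← Finset.sum_sub_distrib, Finset.sum_div]
    refine Finset.sum_congr rfl (fun S _ => ?_)
    rw [chi_update, chi_update]
    by_cases hiS : i ∈ S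
    · rw [if_pos hiS, if_pos hiS, if_pos hiS]
      simp only [bval, if_pos, if_neg, Bool.false_eq_true, ite_true, ite_false]
      ring
    · rw [if_neg hiS, if_neg hiS, if_neg hiS]; ring
  rw [h1, sum_reindex i (fun S => cf u S * chi (S.erase i) x)]
  refine Finset.sum_congr rfl (fun T _ => ?_)
  by_cases h : i ∈ T
  · simp [h]
  · rw [if_neg h, if_neg h, Finset.erase_insert h]


lemma sum_sq_derfun (u : (Fin n → Bool) → ℝ) (i : Fin n) :
    ∑ x : Fin n → Bool, (derfun u i x)^2
      = 2^n * ∑ S : Finset (Fin n), (if i ∈ S then (cf u S)^2 else 0) := by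
  rw [Finset.sum_congr rfl (fun x _ => congrArg (·^2) (derfun_eq u i x)),
    parseval_family (fun T => if i ∈ T then 0 else cf u (insert i T))]
  congr 1
  rw [sum_reindex i (fun S => (cf u S)^2)]
  refine Finset.sum_congr rfl fun T _ => ?_
  by_cases h : i ∈ T <;> simp [h]

lemma inflR_eq_sum_abs_derfun (u : (Fin n → Bool) → ℝ) (i : Fin n) :
    inflR u i = (∑ x : Fin n → Bool, |derfun u i x|) / 2^n := by
  rw [inflR]
  congr 1
  refine Finset.sum_congr rfl fun x _ => ?_
  cases hxi : x i
  · have hupd : Function.update x i false = x := by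
      rw [← hxi]; exact Function.update_eq_self i x
    rw [derfun, hupd, sub_self, abs_zero, add_zero, abs_div, abs_two,
      abs_sub_comm (u (Function.update x i true)) (u x)]
  · have hupd : Function.update x i true = x := by
      rw [← hxi]; exact Function.update_eq_self i x
    rw [derfun, hupd, sub_self, abs_zero, zero_add, abs_div, abs_two]

lemma inflR_sq_le (u : (Fin n → Bool) → ℝ) (i : Fin n) :
    (inflR u i)^2 ≤ ∑ S : Finset (Fin n), (if i ∈ S then (cf u S)^2 else 0) := by
  have hcard : ((Finset.univ : Finset (Fin n → Bool)).card : ℝ) = 2^n := by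
    simp [Fintype.card_fun]
  have hCS : (∑ x : Fin n → Bool, |derfun u i x|)^2
      ≤ (2:ℝ)^n * ∑ x : Fin n → Bool, (derfun u i x)^2 := by
    have h := Finset.sum_mul_sq_le_sq_mul_sq Finset.univ (fun _ => (1:ℝ))
      (fun x => |derfun u i x|)
    simp only [one_mul, one_pow, sq_abs] at h
    have hsum1 : (∑ _x : Fin n → Bool, (1:ℝ)) = 2^n := by
      simp [Fintype.card_fun]
    rw [hsum1] at h
    exact h
  have hS := sum_sq_derfun u i
  rw [inflR_eq_sum_abs_derfun, div_pow]
  rw [div_le_iff₀ (by positivity : (0:ℝ) < ((2:ℝ)^n)^2)]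
  calc (∑ x : Fin n → Bool, |derfun u i x|)^2
      ≤ (2:ℝ)^n * ∑ x : Fin n → Bool, (derfun u i x)^2 := hCS
    _ = (2:ℝ)^n * ((2:ℝ)^n * ∑ S : Finset (Fin n), (if i ∈ S then (cf u S)^2 else 0)) := by
        rw [hS]
    _ = (∑ S : Finset (Fin n), (if i ∈ S then (cf u S)^2 else 0)) * ((2:ℝ)^n)^2 := by ring

lemma decay (δ : ℝ) (hδ0 : 0 < δ) (hδ1 : δ ≤ 1) (k : ℕ) :
    (k:ℝ) * ((1-δ)^k)^2 ≤ 1/(2*Real.exp 1*δ) := by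
  have h1 : (0:ℝ) ≤ 1 - δ := by linarith
  have h2 : (1-δ:ℝ) ≤ Real.exp (-δ) := by
    have := Real.add_one_le_exp (-δ); linarith
  have h4 : (1-δ)^k ≤ Real.exp (-δ)^k := pow_le_pow_left₀ h1 h2 k
  have hek : Real.exp (-δ)^k = Real.exp ((k:ℝ) * (-δ)) := (Real.exp_nat_mul (-δ) k).symm
  have h5 : ((1-δ)^k)^2 ≤ Real.exp (-(2*δ*k)) := by
    have hh := pow_le_pow_left₀ (by positivity : (0:ℝ) ≤ (1-δ)^k) h4 2
    rw [hek] at hh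
    calc ((1-δ)^k)^2 ≤ (Real.exp ((k:ℝ) * (-δ)))^2 := hh
      _ = Real.exp (-(2*δ*k)) := by
          rw [sq, ← Real.exp_add]
          congr 1
          ring
  have hk0 : (0:ℝ) ≤ (k:ℝ) := Nat.cast_nonneg k
  have step : (k:ℝ) * Real.exp (-(2*δ*k)) ≤ 1/(2*Real.exp 1*δ) := by
    set t : ℝ := 2*δ*k with ht
    have ht0 : 0 ≤ t := by positivity
    have htle : t ≤ Real.exp (t - 1) := by
      have := Real.add_one_le_exp (t - 1); linarith
    have hexp : Real.exp (t-1) = Real.exp t / Real.exp 1 := by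
      rw [Real.exp_sub]
    have hkey : t * Real.exp (-t) ≤ 1 / Real.exp 1 := by
      have hpos : 0 < Real.exp (-t) := Real.exp_pos _
      calc t * Real.exp (-t) ≤ Real.exp (t-1) * Real.exp (-t) :=
            mul_le_mul_of_nonneg_right htle (le_of_lt hpos)
        _ = 1 / Real.exp 1 := by
            rw [hexp, div_mul_eq_mul_div, ← Real.exp_add]
            simp
    have hkt : (k:ℝ) * Real.exp (-t) = (t * Real.exp (-t)) / (2*δ) := by
      rw [ht]; field_simp
    rw [hkt]
    rw [div_le_div_iff₀ (by positivity) (by positivity)]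
    calc t * Real.exp (-t) * (2*Real.exp 1*δ)
        ≤ (1/Real.exp 1) * (2*Real.exp 1*δ) := by
          apply mul_le_mul_of_nonneg_right hkey
          positivity
      _ = 1 * (2*δ) := by field_simp
  calc (k:ℝ) * ((1-δ)^k)^2 ≤ (k:ℝ) * Real.exp (-(2*δ*k)) :=
        mul_le_mul_of_nonneg_left h5 hk0
    _ ≤ 1/(2*Real.exp 1*δ) := step

end St18

/-- **Few influential variables of a restricted smoothed function.** For
`f : {-1,1}^n → {-1,1}`, `δ ∈ (0,1]`, a restriction `π` with `|π| ≤ d`, and `τ > 2δd`,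
the number of coordinates `i` not fixed by `π` with `Inf_i((f_δ)_π) ≥ τ` is at most
`1/(e·δ·(τ − 2δd)²)`. -/


theorem stmt18 {n : ℕ} (f : (Fin n → Bool) → Bool) (δ : ℝ) (hδ0 : 0 < δ) (hδ1 : δ ≤ 1)
    (π : Fin n → Option Bool) (d : ℕ) (hπ : rsize π ≤ d)
    (τ : ℝ) (hτ : 2 * δ * d < τ) :
    (Nat.card {i : Fin n //
        π i = none ∧ τ ≤ inflR (fun x => smooth δ (fun z => bval (f z)) (applyR π x)) i} : ℝ)
      ≤ 1 / (Real.exp 1 * δ * (τ - 2 * δ * d) ^ 2) := by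
  classical
  have hd0 : (0:ℝ) ≤ 2*δ*(d:ℝ) := by positivity
  have hτ0 : (0:ℝ) < τ := lt_of_le_of_lt hd0 hτ
  have he : (0:ℝ) < Real.exp 1 := Real.exp_pos 1
  set F : (Fin n → Bool) → ℝ := fun z => bval (f z) with hFdef
  set u : (Fin n → Bool) → ℝ := fun x => smooth δ F (applyR π x) with hudef
  have hFabs : ∀ y, |F y| ≤ 1 := by
    intro y; cases hfy : f y <;> simp [hFdef, bval, hfy] <;> norm_num
  set I : Finset (Fin n) := Finset.univ.filter (fun i => τ ≤ inflR u i) with hIdef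
  -- Step 1: the card bound via the subtype
  have hsub : (Nat.card {i : Fin n // π i = none ∧ τ ≤ inflR u i} : ℝ) ≤ (I.card : ℝ) := by
    have h1 : Nat.card {i : Fin n // π i = none ∧ τ ≤ inflR u i}
        = (Finset.univ.filter (fun i => π i = none ∧ τ ≤ inflR u i)).card := by
      rw [Nat.card_eq_fintype_card]
      exact Fintype.card_subtype _
    rw [h1]
    exact_mod_cast Finset.card_le_card
      (Finset.monotone_filter_right Finset.univ (by intro i _ hi; exact hi.2))
  -- Step 2: the main second-moment bound
  have key : ∀ i ∈ I, τ^2 ≤ ∑ S : Finset (Fin n), (if i ∈ S then (St18.cf u S)^2 else 0) := by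
    intro i hi
    rw [hIdef, Finset.mem_filter] at hi
    calc τ^2 ≤ (inflR u i)^2 := by
          have := hi.2
          nlinarith
      _ ≤ _ := St18.inflR_sq_le u i
  have main : (I.card : ℝ) * τ^2 ≤ 1/(2*Real.exp 1*δ) := by
    have step1 : (I.card : ℝ) * τ^2
        ≤ ∑ i ∈ I, ∑ S : Finset (Fin n), (if i ∈ S then (St18.cf u S)^2 else 0) := by
      calc (I.card : ℝ) * τ^2 = ∑ _i ∈ I, τ^2 := by
            rw [Finset.sum_const, nsmul_eq_mul]
        _ ≤ _ := Finset.sum_le_sum key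
    have step2 : ∑ i ∈ I, ∑ S : Finset (Fin n), (if i ∈ S then (St18.cf u S)^2 else 0)
        ≤ ∑ i : Fin n, ∑ S : Finset (Fin n), (if i ∈ S then (St18.cf u S)^2 else 0) := by
      refine Finset.sum_le_sum_of_subset_of_nonneg (Finset.filter_subset _ _) ?_
      intro i _ _
      refine Finset.sum_nonneg (fun S _ => ?_)
      by_cases h : i ∈ S <;> simp [h] <;> positivity
    have step3 : ∑ i : Fin n, ∑ S : Finset (Fin n), (if i ∈ S then (St18.cf u S)^2 else 0)
        = ∑ S : Finset (Fin n), (S.card : ℝ) * (St18.cf u S)^2 := by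
      rw [Finset.sum_comm]
      refine Finset.sum_congr rfl (fun S _ => ?_)
      rw [Finset.sum_ite_mem, Finset.univ_inter, Finset.sum_const, nsmul_eq_mul]
    have step4 : ∀ S : Finset (Fin n),
        (S.card : ℝ) * (St18.cf u S)^2
          ≤ (1/(2*Real.exp 1*δ)) * (St18.cf (St18.hres δ π F) S)^2 := by
      intro S
      have hcf : St18.cf u S = (1-δ)^S.card * St18.cf (St18.hres δ π F) S := by
        rw [hudef]
        exact St18.cf_smooth_applyR δ π F S
      rw [hcf, mul_pow]
      have hdec := St18.decay δ hδ0 hδ1 S.card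
      have hnn : (0:ℝ) ≤ (St18.cf (St18.hres δ π F) S)^2 := sq_nonneg _
      calc (S.card : ℝ) * (((1-δ)^S.card)^2 * (St18.cf (St18.hres δ π F) S)^2)
          = ((S.card : ℝ) * ((1-δ)^S.card)^2) * (St18.cf (St18.hres δ π F) S)^2 := by ring
        _ ≤ (1/(2*Real.exp 1*δ)) * (St18.cf (St18.hres δ π F) S)^2 :=
            mul_le_mul_of_nonneg_right hdec hnn
    have step5 : ∑ S : Finset (Fin n), (St18.cf (St18.hres δ π F) S)^2 ≤ 1 :=
      St18.sum_cf_sq_le _ (St18.abs_hres_le δ hδ0.le hδ1 π F hFabs)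
    calc (I.card : ℝ) * τ^2
        ≤ ∑ S : Finset (Fin n), (S.card : ℝ) * (St18.cf u S)^2 := by
          rw [← step3]; exact le_trans step1 step2
      _ ≤ ∑ S : Finset (Fin n), (1/(2*Real.exp 1*δ)) * (St18.cf (St18.hres δ π F) S)^2 :=
          Finset.sum_le_sum (fun S _ => step4 S)
      _ = (1/(2*Real.exp 1*δ)) * ∑ S : Finset (Fin n), (St18.cf (St18.hres δ π F) S)^2 := by
          rw [Finset.mul_sum]
      _ ≤ 1/(2*Real.exp 1*δ) := by
          have h2 : (0:ℝ) < 2*Real.exp 1*δ := by positivity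
          calc (1/(2*Real.exp 1*δ)) * ∑ S : Finset (Fin n), (St18.cf (St18.hres δ π F) S)^2
              ≤ (1/(2*Real.exp 1*δ)) * 1 :=
                mul_le_mul_of_nonneg_left step5 (by positivity)
            _ = 1/(2*Real.exp 1*δ) := mul_one _
  -- Step 3: conclude
  have hIcard : (I.card : ℝ) ≤ 1/(2*Real.exp 1*δ*τ^2) := by
    rw [le_div_iff₀ (by positivity : (0:ℝ) < 2*Real.exp 1*δ*τ^2)]
    have h2 : (0:ℝ) < 2*Real.exp 1*δ := by positivity
    calc (I.card : ℝ) * (2*Real.exp 1*δ*τ^2)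
        = ((I.card : ℝ) * τ^2) * (2*Real.exp 1*δ) := by ring
      _ ≤ (1/(2*Real.exp 1*δ)) * (2*Real.exp 1*δ) := mul_le_mul_of_nonneg_right main h2.le
      _ = 1 := by field_simp
  have hfinal : 1/(2*Real.exp 1*δ*τ^2) ≤ 1 / (Real.exp 1 * δ * (τ - 2 * δ * d) ^ 2) := by
    apply one_div_le_one_div_of_le
    · have hlt : (0:ℝ) < τ - 2*δ*d := by linarith
      positivity
    · have hsq : (τ - 2*δ*(d:ℝ))^2 ≤ τ^2 := by nlinarith
      have hm := mul_le_mul_of_nonneg_left hsq (by positivity : (0:ℝ) ≤ Real.exp 1 * δ)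
      nlinarith [mul_nonneg (mul_nonneg he.le hδ0.le) (sq_nonneg τ)]
  exact le_trans hsub (le_trans hIcard hfinal)
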